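/- Let α₁, α₂ > 0 and T₀ > 0, and define ℓ(x,u) = (α₁ g(x)ᵀH_x(x) − α₂ T₀ g(x)ᵀS_x(x))ᵀ u. Let x : [0, t_f] → 𝕏 be a continuously differentiable solution of the RIPHS state equation with continuous control u and x(0) = x⁰. Then the following integral identity holds: ∫₀^{t_f} ℓ(x(t), u(t)) dt = α₁ [H(x(t_f)) − H(x⁰)] + α₂ T₀ ( S(x⁰) − S(x(t_f)) + Σ_{k=1}^N ∫₀^{t_f} γ_k(x(t)) ({S,H}_{J_k}(x(t)))² dt ). -/

import Mathlib

open Set Matrix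

/-- Matrix–vector multiplication on Euclidean space. -/
noncomputable def mv {a b : ℕ} (A : Matrix (Fin a) (Fin b) ℝ)
    (x : EuclideanSpace ℝ (Fin b)) : EuclideanSpace ℝ (Fin a) :=
  Matrix.toEuclideanLin A x

/-- The Poisson bracket `{S,H}_J(x) = S_x(x)ᵀ J H_x(x)`, evaluated at given gradients. -/
noncomputable def bracket {n : ℕ} (J : Matrix (Fin n) (Fin n) ℝ)
    (Sx Hx : EuclideanSpace ℝ (Fin n)) : ℝ :=
  inner ℝ Sx (mv J Hx)

lemma mv_add {a b : ℕ} (A B : Matrix (Fin a) (Fin b) ℝ) (v : EuclideanSpace ℝ (Fin b)) :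
    mv (A + B) v = mv A v + mv B v := by
  simp [mv, map_add]

lemma mv_sum {a b ι : ℕ} (A : Fin ι → Matrix (Fin a) (Fin b) ℝ) (v : EuclideanSpace ℝ (Fin b)) :
    mv (∑ k, A k) v = ∑ k, mv (A k) v := by
  simp [mv, map_sum]

lemma mv_smul {a b : ℕ} (c : ℝ) (A : Matrix (Fin a) (Fin b) ℝ) (v : EuclideanSpace ℝ (Fin b)) :
    mv (c • A) v = c • mv A v := by
  simp [mv, _root_.map_smul]

lemma inner_mv {a b : ℕ} (A : Matrix (Fin a) (Fin b) ℝ) (w : EuclideanSpace ℝ (Fin a))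
    (v : EuclideanSpace ℝ (Fin b)) :
    (inner ℝ w (mv A v) : ℝ) = inner ℝ (mv Aᵀ w) v := by
  simp only [mv, Matrix.toEuclideanLin_apply, PiLp.inner_apply, RCLike.inner_apply,
    conj_trivial]
  show (A *ᵥ (WithLp.ofLp v)) ⬝ᵥ (WithLp.ofLp w)
      = (WithLp.ofLp v) ⬝ᵥ (Aᵀ *ᵥ (WithLp.ofLp w))
  rw [dotProduct_comm, dotProduct_mulVec, Matrix.mulVec_transpose,
    dotProduct_comm]

lemma inner_mv_skew {a : ℕ} {A : Matrix (Fin a) (Fin a) ℝ} (hA : Aᵀ = -A)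
    (v : EuclideanSpace ℝ (Fin a)) : (inner ℝ v (mv A v) : ℝ) = 0 := by
  have h := inner_mv A v v
  rw [hA] at h
  have h2 : mv (-A) v = -(mv A v) := by simp [mv, map_neg]
  rw [h2, inner_neg_left, real_inner_comm] at h
  rw [real_inner_comm]
  linarith

lemma continuousOn_mv {α : Type*} [TopologicalSpace α] {s : Set α} {a b : ℕ}
    {A : α → Matrix (Fin a) (Fin b) ℝ} {v : α → EuclideanSpace ℝ (Fin b)}
    (hA : ContinuousOn A s) (hv : ContinuousOn v s) :
    ContinuousOn (fun t => mv (A t) (v t)) s := by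
  have hv' : ∀ j, ContinuousOn (fun t => v t j) s := fun j =>
    ((continuous_apply j).comp (PiLp.continuous_ofLp 2 (fun _ : Fin b => ℝ))).comp_continuousOn hv
  have hA' : ∀ i j, ContinuousOn (fun t => A t i j) s := fun i j =>
    ((continuous_apply j).comp
      (continuous_apply (A := fun _ : Fin a => Fin b → ℝ) i)).comp_continuousOn hA
  have h1 : ContinuousOn (fun t => (fun i => ∑ j, A t i j * v t j : Fin a → ℝ)) s :=
    continuousOn_pi.2 fun i =>
      continuousOn_finset_sum _ fun j _ => (hA' i j).mul (hv' j)
  have h2 := (PiLp.continuous_toLp 2 (fun _ : Fin a => ℝ)).comp_continuousOn h1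
  exact h2.congr fun t ht => rfl

lemma continuousOn_transpose {α : Type*} [TopologicalSpace α] {s : Set α} {a b : ℕ}
    {A : α → Matrix (Fin a) (Fin b) ℝ} (hA : ContinuousOn A s) :
    ContinuousOn (fun t => (A t)ᵀ) s :=
  continuousOn_pi.2 fun j => continuousOn_pi.2 fun i =>
    ((continuous_apply j).comp
      (continuous_apply (A := fun _ : Fin a => Fin b → ℝ) i)).comp_continuousOn hA

/-- Integral identity for the supply-rate stage cost
`ℓ(x,u) = (α₁ y_H − α₂T₀ y_S)ᵀ u` along solutions of a RIPHS:
`∫₀^{t_f} ℓ = α₁[H(x(t_f)) − H(x⁰)] + α₂T₀ (S(x⁰) − S(x(t_f)) + Σ_k ∫₀^{t_f} γ_k {S,H}²_{J_k})`. -/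
theorem integral_supply_identity
    (n N m : ℕ)
    (X : Set (EuclideanSpace ℝ (Fin n))) (hXopen : IsOpen X)
    -- Poisson structure matrix field J₀ : continuous, skew-symmetric
    (J0 : EuclideanSpace ℝ (Fin n) → Matrix (Fin n) (Fin n) ℝ)
    (hJ0cont : ContinuousOn J0 X)
    (hJ0skew : ∀ p ∈ X, (J0 p)ᵀ = -(J0 p))
    -- Hamiltonian H, differentiable with continuous gradient Hx
    (H : EuclideanSpace ℝ (Fin n) → ℝ)
    (Hx : EuclideanSpace ℝ (Fin n) → EuclideanSpace ℝ (Fin n))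
    (hH : ∀ p ∈ X, HasGradientAt H (Hx p) p)
    (hHxcont : ContinuousOn Hx X)
    -- entropy S, differentiable with continuous gradient Sx, Casimir of J₀
    (S : EuclideanSpace ℝ (Fin n) → ℝ)
    (Sx : EuclideanSpace ℝ (Fin n) → EuclideanSpace ℝ (Fin n))
    (hS : ∀ p ∈ X, HasGradientAt S (Sx p) p)
    (hSxcont : ContinuousOn Sx X)
    (hCasimir : ∀ p ∈ X, mv (J0 p) (Sx p) = 0)
    -- constant skew-symmetric structure matrices J₁,…,J_N
    (J : Fin N → Matrix (Fin n) (Fin n) ℝ)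
    (hJskew : ∀ k, (J k)ᵀ = -(J k))
    -- positive continuous functions γ_k
    (γ : Fin N → EuclideanSpace ℝ (Fin n) → ℝ)
    (hγpos : ∀ k, ∀ p ∈ X, 0 < γ k p)
    (hγcont : ∀ k, ContinuousOn (γ k) X)
    -- continuous input matrix g
    (g : EuclideanSpace ℝ (Fin n) → Matrix (Fin n) (Fin m) ℝ)
    (hgcont : ContinuousOn g X)
    (α₁ α₂ T₀ : ℝ) (hα₁ : 0 < α₁) (hα₂ : 0 < α₂) (hT₀ : 0 < T₀)
    -- a continuously differentiable solution x on [0, t_f] with continuous control u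
    (tf : ℝ) (htf : 0 ≤ tf)
    (x : ℝ → EuclideanSpace ℝ (Fin n))
    (u : ℝ → EuclideanSpace ℝ (Fin m))
    (hu : ContinuousOn u (Icc 0 tf))
    (hxmem : ∀ t ∈ Icc 0 tf, x t ∈ X)
    (x' : ℝ → EuclideanSpace ℝ (Fin n))
    (hx'cont : ContinuousOn x' (Icc 0 tf))
    (hxdiff : ∀ t ∈ Icc 0 tf, HasDerivWithinAt x (x' t) (Icc 0 tf) t)
    -- the RIPHS state equation
    (hdyn : ∀ t ∈ Icc 0 tf,
      x' t =
        mv (J0 (x t) + ∑ k, (γ k (x t) * bracket (J k) (Sx (x t)) (Hx (x t))) • J k)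
           (Hx (x t))
        + mv (g (x t)) (u t)) :
    -- the integral identity
    ∫ t in (0:ℝ)..tf,
        (inner ℝ (α₁ • mv (g (x t))ᵀ (Hx (x t)) - (α₂ * T₀) • mv (g (x t))ᵀ (Sx (x t)))
          (u t) : ℝ)
      = α₁ * (H (x tf) - H (x 0))
        + α₂ * T₀ * (S (x 0) - S (x tf)
            + ∑ k, ∫ t in (0:ℝ)..tf,
                γ k (x t) * (bracket (J k) (Sx (x t)) (Hx (x t)))^2) := by
  have hxcont : ContinuousOn x (Icc 0 tf) := fun t ht => (hxdiff t ht).continuousWithinAt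
  have hmaps : MapsTo x (Icc 0 tf) X := hxmem
  -- continuity of composed maps
  have hHc : ContinuousOn (fun t => Hx (x t)) (Icc 0 tf) := hHxcont.comp hxcont hmaps
  have hSc : ContinuousOn (fun t => Sx (x t)) (Icc 0 tf) := hSxcont.comp hxcont hmaps
  have hgc : ContinuousOn (fun t => g (x t)) (Icc 0 tf) := hgcont.comp hxcont hmaps
  have hgTH : ContinuousOn (fun t => mv (g (x t))ᵀ (Hx (x t))) (Icc 0 tf) :=
    continuousOn_mv (continuousOn_transpose hgc) hHc
  have hgTS : ContinuousOn (fun t => mv (g (x t))ᵀ (Sx (x t))) (Icc 0 tf) :=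
    continuousOn_mv (continuousOn_transpose hgc) hSc
  have hbc : ∀ k, ContinuousOn (fun t => bracket (J k) (Sx (x t)) (Hx (x t))) (Icc 0 tf) := by
    intro k
    have : ContinuousOn (fun t => mv (J k) (Hx (x t))) (Icc 0 tf) :=
      continuousOn_mv continuousOn_const hHc
    exact continuous_inner.comp_continuousOn (hSc.prodMk this)
  have hℓc : ContinuousOn (fun t =>
      (inner ℝ (α₁ • mv (g (x t))ᵀ (Hx (x t)) - (α₂ * T₀) • mv (g (x t))ᵀ (Sx (x t)))
        (u t) : ℝ)) (Icc 0 tf) :=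
    continuous_inner.comp_continuousOn
      (((hgTH.const_smul α₁).sub (hgTS.const_smul (α₂ * T₀))).prodMk hu)
  have hqc : ∀ k, ContinuousOn
      (fun t => γ k (x t) * (bracket (J k) (Sx (x t)) (Hx (x t)))^2) (Icc 0 tf) :=
    fun k => ((hγcont k).comp hxcont hmaps).mul ((hbc k).pow 2)
  -- integrability
  have huIcc : uIcc (0:ℝ) tf = Icc 0 tf := uIcc_of_le htf
  have hℓint : IntervalIntegrable (fun t =>
      (inner ℝ (α₁ • mv (g (x t))ᵀ (Hx (x t)) - (α₂ * T₀) • mv (g (x t))ᵀ (Sx (x t)))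
        (u t) : ℝ)) MeasureTheory.volume 0 tf :=
    (huIcc ▸ hℓc).intervalIntegrable
  have hqint : ∀ k, IntervalIntegrable
      (fun t => γ k (x t) * (bracket (J k) (Sx (x t)) (Hx (x t)))^2)
      MeasureTheory.volume 0 tf := fun k => (huIcc ▸ hqc k).intervalIntegrable
  -- pointwise identities
  have keyH : ∀ t ∈ Icc 0 tf, (inner ℝ (Hx (x t)) (x' t) : ℝ)
      = inner ℝ (mv (g (x t))ᵀ (Hx (x t))) (u t) := by
    intro t ht
    rw [hdyn t ht, inner_add_right, mv_add, mv_sum, inner_add_right, inner_sum]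
    have h0 : (inner ℝ (Hx (x t)) (mv (J0 (x t)) (Hx (x t))) : ℝ) = 0 :=
      inner_mv_skew (hJ0skew _ (hxmem t ht)) _
    have hk : ∀ k : Fin N, (inner ℝ (Hx (x t))
        (mv ((γ k (x t) * bracket (J k) (Sx (x t)) (Hx (x t))) • J k) (Hx (x t))) : ℝ) = 0 := by
      intro k
      rw [mv_smul, inner_smul_right, inner_mv_skew (hJskew k), mul_zero]
    rw [h0, Finset.sum_congr rfl (fun k _ => hk k), Finset.sum_const_zero,
      inner_mv]
    ring
  have keyS : ∀ t ∈ Icc 0 tf, (inner ℝ (Sx (x t)) (x' t) : ℝ)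
      = (∑ k, γ k (x t) * (bracket (J k) (Sx (x t)) (Hx (x t)))^2)
        + inner ℝ (mv (g (x t))ᵀ (Sx (x t))) (u t) := by
    intro t ht
    rw [hdyn t ht, inner_add_right, mv_add, mv_sum, inner_add_right, inner_sum]
    have h0 : (inner ℝ (Sx (x t)) (mv (J0 (x t)) (Hx (x t))) : ℝ) = 0 := by
      rw [inner_mv, hJ0skew _ (hxmem t ht)]
      have : mv (-(J0 (x t))) (Sx (x t)) = -(mv (J0 (x t)) (Sx (x t))) := by
        simp [mv, map_neg]
      rw [this, hCasimir _ (hxmem t ht)]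
      simp
    have hk : ∀ k : Fin N, (inner ℝ (Sx (x t))
        (mv ((γ k (x t) * bracket (J k) (Sx (x t)) (Hx (x t))) • J k) (Hx (x t))) : ℝ)
        = γ k (x t) * (bracket (J k) (Sx (x t)) (Hx (x t)))^2 := by
      intro k
      rw [mv_smul, inner_smul_right]
      show (γ k (x t) * bracket (J k) (Sx (x t)) (Hx (x t)))
          * bracket (J k) (Sx (x t)) (Hx (x t)) = _
      ring
    rw [h0, Finset.sum_congr rfl (fun k _ => hk k), inner_mv]
    ring
  -- the potential function and its derivative
  set G : ℝ → ℝ := fun t => α₁ * H (x t) - α₂ * T₀ * S (x t) with hG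
  have hHcont : ContinuousOn H X := fun p hp => (hH p hp).hasFDerivAt.continuousAt.continuousWithinAt
  have hScont : ContinuousOn S X := fun p hp => (hS p hp).hasFDerivAt.continuousAt.continuousWithinAt
  have hGcont : ContinuousOn G (Icc 0 tf) :=
    ((hHcont.comp hxcont hmaps).const_smul α₁).sub ((hScont.comp hxcont hmaps).const_smul (α₂ * T₀))
  have hGderiv : ∀ t ∈ Ioo 0 tf, HasDerivAt G
      ((inner ℝ (α₁ • mv (g (x t))ᵀ (Hx (x t)) - (α₂ * T₀) • mv (g (x t))ᵀ (Sx (x t))) (u t) : ℝ)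
        - α₂ * T₀ * ∑ k, γ k (x t) * (bracket (J k) (Sx (x t)) (Hx (x t)))^2) t := by
    intro t ht
    have htIcc : t ∈ Icc 0 tf := Ioo_subset_Icc_self ht
    have hx_t : HasDerivAt x (x' t) t :=
      (hxdiff t htIcc).hasDerivAt (Icc_mem_nhds ht.1 ht.2)
    have hH' : HasDerivAt (fun s => H (x s)) (inner ℝ (Hx (x t)) (x' t) : ℝ) t := by
      have := ((hH _ (hxmem t htIcc)).hasFDerivAt).comp_hasDerivAt t hx_t
      simp only [InnerProductSpace.toDual_apply_apply] at this
      exact this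
    have hS' : HasDerivAt (fun s => S (x s)) (inner ℝ (Sx (x t)) (x' t) : ℝ) t := by
      have := ((hS _ (hxmem t htIcc)).hasFDerivAt).comp_hasDerivAt t hx_t
      simp only [InnerProductSpace.toDual_apply_apply] at this
      exact this
    have := (hH'.const_mul α₁).sub (hS'.const_mul (α₂ * T₀))
    convert this using 1
    case e'_4 => rfl
    case e'_5 => rfl
    case e'_8 => rfl
    rw [keyH t htIcc, keyS t htIcc, inner_sub_left, inner_smul_left]
    simp only [RCLike.conj_to_real, inner_smul_left, conj_trivial]
    ring
  -- FTC
  have hrest : ContinuousOn (fun t =>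
      α₂ * T₀ * ∑ k, γ k (x t) * (bracket (J k) (Sx (x t)) (Hx (x t)))^2) (Icc 0 tf) :=
    continuousOn_const.mul (continuousOn_finset_sum _ fun k _ => hqc k)
  have hrint : IntervalIntegrable (fun t =>
      α₂ * T₀ * ∑ k, γ k (x t) * (bracket (J k) (Sx (x t)) (Hx (x t)))^2)
      MeasureTheory.volume 0 tf := (huIcc ▸ hrest).intervalIntegrable
  have hFTC := intervalIntegral.integral_eq_sub_of_hasDeriv_right_of_le htf hGcont
    (fun t ht => (hGderiv t ht).hasDerivWithinAt) (hℓint.sub hrint)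
  rw [intervalIntegral.integral_sub hℓint hrint, intervalIntegral.integral_const_mul,
    intervalIntegral.integral_finset_sum (fun k _ => hqint k)] at hFTC
  simp only [hG] at hFTC
  linarith [hFTC]
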